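/- Let n points be placed independently and uniformly at random in [0,1] and let r(n) > 0 satisfy r(n)·n/log n → 0 as n → ∞. Say x ∈ [0,1] is covered if some point lies in [x - r(n), x + r(n)]. Then limsup_{n→∞} P(every x ∈ [0,1] is covered) ≤ c₂ for some constant c₂ < 1. -/

import Mathlib

open MeasureTheory ProbabilityTheory Filter
open scoped ENNReal

lemma bonferroni_aux {Ω : Type*} [MeasurableSpace Ω] (P : Measure Ω) {m : ℕ}
    (A : Fin m → Set Ω) (hA : ∀ j, MeasurableSet (A j)) :
    ∑ j, P (A j) ≤ P (⋃ j, A j) + ∑ q ∈ Finset.univ.offDiag, P (A q.1 ∩ A q.2) := by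
  classical
  have hAm : ∀ j, Measurable ((A j).indicator (1 : Ω → ℝ≥0∞)) :=
    fun j => measurable_one.indicator (hA j)
  have hU : MeasurableSet (⋃ j, A j) := MeasurableSet.iUnion hA
  have hI : ∀ q : Fin m × Fin m, MeasurableSet (A q.1 ∩ A q.2) :=
    fun q => (hA q.1).inter (hA q.2)
  calc ∑ j, P (A j) = ∑ j : Fin m, ∫⁻ ω, (A j).indicator (1 : Ω → ℝ≥0∞) ω ∂P := by
        simp only [lintegral_indicator_one (hA _)]
    _ = ∫⁻ ω, ∑ j, (A j).indicator (1 : Ω → ℝ≥0∞) ω ∂P :=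
        (lintegral_finset_sum _ (fun j _ => hAm j)).symm
    _ ≤ ∫⁻ ω, ((⋃ j, A j).indicator (1 : Ω → ℝ≥0∞) ω
          + ∑ q ∈ Finset.univ.offDiag, (A q.1 ∩ A q.2).indicator (1 : Ω → ℝ≥0∞) ω) ∂P := by
        apply lintegral_mono
        intro ω
        dsimp only
        set s : Finset (Fin m) := Finset.univ.filter (fun j => ω ∈ A j) with hs
        have h1 : ∑ j, (A j).indicator (1 : Ω → ℝ≥0∞) ω = (s.card : ℝ≥0∞) := by
          simp [Set.indicator_apply, hs, Finset.sum_boole]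
        have h2 : ∑ q ∈ Finset.univ.offDiag, (A q.1 ∩ A q.2).indicator (1 : Ω → ℝ≥0∞) ω
            = (s.offDiag.card : ℝ≥0∞) := by
          have : ∀ q : Fin m × Fin m, (A q.1 ∩ A q.2).indicator (1 : Ω → ℝ≥0∞) ω
              = if ω ∈ A q.1 ∧ ω ∈ A q.2 then 1 else 0 := by
            intro q; simp [Set.indicator_apply, Set.mem_inter_iff]
          rw [Finset.sum_congr rfl (fun q _ => this q), Finset.sum_boole]
          congr 2
          ext q
          simp [Finset.mem_offDiag, Finset.mem_filter, hs]
          tauto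
        rw [h1, h2, Finset.offDiag_card]
        by_cases hne : ∃ j, ω ∈ A j
        · have hmem : ω ∈ ⋃ j, A j := Set.mem_iUnion.mpr hne
          rw [Set.indicator_of_mem hmem]
          have ht : 1 ≤ s.card := by
            obtain ⟨j, hj⟩ := hne
            exact Finset.card_pos.mpr ⟨j, by simp [hs, hj]⟩
          have hnat : s.card ≤ 1 + (s.card * s.card - s.card) := by
            obtain ⟨u, hu⟩ := Nat.exists_eq_add_of_le ht
            have h2' : s.card * s.card = u*u + 2*u + 1 := by rw [hu]; ring
            omega
          calc (s.card : ℝ≥0∞) ≤ ((1 + (s.card * s.card - s.card) : ℕ) : ℝ≥0∞) :=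
                Nat.cast_le.mpr hnat
            _ = (1 : Ω → ℝ≥0∞) ω + ((s.card * s.card - s.card : ℕ) : ℝ≥0∞) := by
                push_cast; simp
        · have h0 : s.card = 0 := by
            simp only [hs, Finset.card_eq_zero, Finset.filter_eq_empty_iff]
            intro j _; exact fun h => hne ⟨j, h⟩
          simp [h0]
    _ = P (⋃ j, A j) + ∑ q ∈ Finset.univ.offDiag, P (A q.1 ∩ A q.2) := by
        rw [lintegral_add_left (measurable_one.indicator hU),
          lintegral_indicator_one hU,
          lintegral_finset_sum _ (fun q _ => measurable_one.indicator (hI q))]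
        simp only [lintegral_indicator_one (hI _)]

lemma avoid_measure {Ω : Type*} [MeasurableSpace Ω] (P : Measure Ω) [IsProbabilityMeasure P]
    {n : ℕ} (Y : Fin n → Ω → ℝ) (hmeas : ∀ i, Measurable (Y i))
    (hunif : ∀ i, Measure.map (Y i) P = volume.restrict (Set.Icc (0:ℝ) 1))
    (hindep : iIndepFun Y P)
    (S : Set ℝ) (hS : MeasurableSet S) (hsub : S ⊆ Set.Icc 0 1) :
    P (⋂ i, Y i ⁻¹' Sᶜ) = (1 - volume S)^n := by
  rw [hindep.meas_iInter (fun i => ⟨Sᶜ, hS.compl, rfl⟩)]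
  have hfac : ∀ i, P ((Y i ⁻¹' S)ᶜ) = 1 - volume S := by
    intro i
    have h1 : P (Y i ⁻¹' S) = volume S := by
      rw [← Measure.map_apply (hmeas i) hS, hunif i, Measure.restrict_apply hS,
        Set.inter_eq_self_of_subset_left hsub]
    rw [prob_compl_eq_one_sub ((hmeas i) hS), h1]
  simp [Set.preimage_compl, hfac, Finset.prod_const]

set_option maxHeartbeats 1000000 in
/-- One-dimensional 1-coverage lower bound: if `n` points are i.i.d. uniform on
`[0,1]` and the radius `r(n) > 0` satisfies `r(n)·n/log n → 0`, then the
probability that every point of `[0,1]` is within `r(n)` of some point has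
`limsup` bounded by a constant `c₂ < 1`. -/
theorem coverage_lower_bound
    {Ω : Type*} [MeasurableSpace Ω] (P : Measure Ω) [IsProbabilityMeasure P]
    (X : (n : ℕ) → Fin n → Ω → ℝ)
    (hmeas : ∀ n i, Measurable (X n i))
    (hunif : ∀ n i, Measure.map (X n i) P = volume.restrict (Set.Icc (0:ℝ) 1))
    (hindep : ∀ n, iIndepFun (X n) P)
    (r : ℕ → ℝ) (hrpos : ∀ n, 0 < r n)
    (hr : Tendsto (fun n : ℕ => r n * n / Real.log n) atTop (nhds 0)) :
    ∃ c₂ : ℝ, c₂ < 1 ∧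
      Filter.limsup
        (fun n : ℕ =>
          P {ω | ∀ x ∈ Set.Icc (0:ℝ) 1, ∃ i : Fin n,
              X n i ω ∈ Set.Icc (x - r n) (x + r n)})
        atTop ≤ ENNReal.ofReal c₂ := by
  refine ⟨13/16, by norm_num, ?_⟩
  have hev : ∀ᶠ n : ℕ in atTop,
      P {ω | ∀ x ∈ Set.Icc (0:ℝ) 1, ∃ i : Fin n,
          X n i ω ∈ Set.Icc (x - r n) (x + r n)} ≤ ENNReal.ofReal (13/16) := by
    have h18 : ∀ᶠ n : ℕ in atTop, r n * n / Real.log n < 1/8 :=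
      hr.eventually_lt_const (by norm_num)
    filter_upwards [h18, eventually_ge_atTop 3] with n hn h3
    -- basic real facts
    set ρ := r n with hρdef
    have hρ : 0 < ρ := hrpos n
    have hn3 : (3:ℝ) ≤ (n:ℝ) := by exact_mod_cast h3
    have hnpos : (0:ℝ) < n := by linarith
    have hexp3 : Real.exp 1 ≤ 3 := by
      have := Real.exp_one_lt_d9; linarith
    have hlog1 : 1 ≤ Real.log n :=
      (Real.le_log_iff_exp_le hnpos).mpr (le_trans hexp3 hn3)
    have hlogpos : (0:ℝ) < Real.log n := by linarith
    have hrn : ρ * n < Real.log n / 8 := by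
      have h := (div_lt_iff₀ hlogpos).mp hn
      linarith
    have hlogn : Real.log n ≤ n := by
      have := Real.log_le_sub_one_of_pos hnpos; linarith
    have hρ8 : ρ < 1/8 := by
      have h : ρ * n < (1/8) * n := by linarith
      exact lt_of_mul_lt_mul_right h hnpos.le
    have h1x : (0:ℝ) < 1 - 2*ρ := by linarith
    -- p := (1-2ρ)^n and its lower bound
    set p : ℝ := (1 - 2*ρ)^n with hpdef
    have hppos : 0 < p := pow_pos h1x n
    have hinv : (1:ℝ)/(1-2*ρ) ≤ 1 + 4*ρ := by
      rw [div_le_iff₀ h1x]; nlinarith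
    have hlogb : -(4*ρ) ≤ Real.log (1-2*ρ) := by
      have h := Real.log_le_sub_one_of_pos (inv_pos.mpr h1x)
      rw [Real.log_inv] at h
      have hi : (1-2*ρ)⁻¹ = 1/(1-2*ρ) := inv_eq_one_div _
      rw [hi] at h
      linarith
    have hp_exp : Real.exp (-(4*ρ*n)) ≤ p := by
      have h1 : p = Real.exp ((n:ℝ) * Real.log (1-2*ρ)) := by
        rw [Real.exp_nat_mul, Real.exp_log h1x]
      rw [h1]
      apply Real.exp_le_exp.mpr
      have := mul_le_mul_of_nonneg_left hlogb (le_of_lt hnpos)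
      nlinarith
    set E : ℝ := Real.exp (Real.log n / 2) with hEdef
    have hEpos : 0 < E := Real.exp_pos _
    have hE32 : (3:ℝ)/2 ≤ E := by
      have h := Real.add_one_le_exp (Real.log n / 2)
      have : Real.exp (1/2 : ℝ) ≤ E := Real.exp_le_exp.mpr (by linarith)
      have h2 := Real.add_one_le_exp (1/2 : ℝ)
      linarith
    have hE2 : E * E = n := by
      rw [← Real.exp_add]
      have : Real.log n / 2 + Real.log n / 2 = Real.log n := by ring
      rw [this, Real.exp_log hnpos]
    have hpE : 1/E ≤ p := by
      have h4 : Real.exp (4*ρ*n) ≤ E := Real.exp_le_exp.mpr (by linarith)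
      have : 1/E ≤ 1/Real.exp (4*ρ*n) :=
        one_div_le_one_div_of_le (Real.exp_pos _) h4
      calc 1/E ≤ 1/Real.exp (4*ρ*n) := this
        _ = Real.exp (-(4*ρ*n)) := by rw [Real.exp_neg]; ring
        _ ≤ p := hp_exp
    have h1p : 1/p ≤ E := by
      rw [div_le_iff₀ hppos]
      have := (div_le_iff₀ hEpos).mp hpE
      linarith [mul_comm E p]
    -- the number of intervals
    set m : ℕ := ⌈1/(4*p)⌉₊ with hmdef
    have hm1 : 1 ≤ m := Nat.one_le_iff_ne_zero.mpr (by
      simp only [hmdef, ne_eq, Nat.ceil_eq_zero, not_le]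
      positivity)
    have hmlow : 1/(4*p) ≤ (m:ℝ) := Nat.le_ceil _
    have hm_up : (m:ℝ) ≤ 1/(4*p) + 1 := le_of_lt (Nat.ceil_lt_add_one (by positivity))
    have hmp_low : 1/4 ≤ (m:ℝ) * p := by
      have := mul_le_mul_of_nonneg_right hmlow (le_of_lt hppos)
      have he : (1/(4*p)) * p = 1/4 := by
        rw [div_mul_eq_mul_div, one_mul, div_eq_iff (by positivity : (4:ℝ)*p ≠ 0)]
        ring
      linarith
    have hmE : (m:ℝ) ≤ E := by
      have h14 : 1/(4*p) = (1/p)/4 := by ring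
      have : 1/(4*p) ≤ E/4 := by rw [h14]; linarith
      linarith
    have hlogE : Real.log n ≤ 2*E := by
      have := Real.add_one_le_exp (Real.log n / 2)
      linarith
    have hgeom : 3*ρ*(m:ℝ) ≤ 1 := by
      have h8 : ρ * (8*(n:ℝ)) ≤ Real.log n := by linarith
      have hρE : 8*ρ*E ≤ 2 := by
        have h1 : ρ * (8*(n:ℝ)) * E ≤ Real.log n * E :=
          mul_le_mul_of_nonneg_right h8 (le_of_lt hEpos)
        have h2 : Real.log n * E ≤ 2*E*E :=
          mul_le_mul_of_nonneg_right hlogE (le_of_lt hEpos)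
        have h4 : 2*E*E = 2*(n:ℝ) := by rw [mul_assoc, hE2]
        have h5 : (8*ρ*E)*(n:ℝ) ≤ 2*(n:ℝ) := by linarith [h1, h2, h4]
        exact le_of_mul_le_mul_right h5 hnpos
      have hmm : 3*ρ*(m:ℝ) ≤ 3*ρ*E :=
        mul_le_mul_of_nonneg_left hmE (by positivity)
      linarith
    clear_value ρ p E m
    -- the intervals and events
    set I : Fin m → Set ℝ := fun j => Set.Icc (3*ρ*(j:ℕ)) (3*ρ*(j:ℕ) + 2*ρ) with hIdef
    set A : Fin m → Set Ω := fun j => ⋂ i : Fin n, X n i ⁻¹' (I j)ᶜ with hAdef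
    have hjm : ∀ j : Fin m, ((j:ℕ):ℝ) + 1 ≤ (m:ℝ) := by
      intro j
      have : (j:ℕ) + 1 ≤ m := j.2
      exact_mod_cast this
    have hIsub : ∀ j, I j ⊆ Set.Icc (0:ℝ) 1 := by
      intro j x hx
      obtain ⟨hx1, hx2⟩ := hx
      have hj := hjm j
      constructor
      · have : (0:ℝ) ≤ 3*ρ*(j:ℕ) := by positivity
        linarith
      · nlinarith
    have hImeas : ∀ j, MeasurableSet (I j) := fun j => measurableSet_Icc
    have hIvol : ∀ j, volume (I j) = ENNReal.ofReal (2*ρ) := by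
      intro j
      rw [hIdef]
      simp only [Real.volume_Icc]
      congr 1
      ring
    have hAmeas : ∀ j, MeasurableSet (A j) :=
      fun j => MeasurableSet.iInter (fun i => (hmeas n i) (hImeas j).compl)
    have hPA : ∀ j, P (A j) = ENNReal.ofReal p := by
      intro j
      rw [hAdef]
      rw [avoid_measure P (X n) (hmeas n) (hunif n) (hindep n) (I j) (hImeas j) (hIsub j)]
      rw [hIvol j, ← ENNReal.ofReal_one, ← ENNReal.ofReal_sub _ (by positivity),
        ← ENNReal.ofReal_pow (by linarith)]
      rw [hpdef]
    have hdisj : ∀ j k : Fin m, j ≠ k → Disjoint (I j) (I k) := by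
      have key : ∀ j k : Fin m, (j:ℕ) < (k:ℕ) → Disjoint (I j) (I k) := by
        intro j k hjk
        rw [Set.disjoint_left]
        intro x hxj hxk
        have hj1 : ((j:ℕ):ℝ) + 1 ≤ ((k:ℕ):ℝ) := by exact_mod_cast hjk
        have h1 : x ≤ 3*ρ*(j:ℕ) + 2*ρ := hxj.2
        have h2 : 3*ρ*(k:ℕ) ≤ x := hxk.1
        nlinarith
      intro j k hjk
      rcases lt_or_gt_of_ne (fun h => hjk (Fin.ext h)) with h | h
      · exact key j k h
      · exact (key k j h).symm
    have hPAA : ∀ j k : Fin m, j ≠ k →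
        P (A j ∩ A k) = ENNReal.ofReal ((1 - 4*ρ)^n) := by
      intro j k hjk
      have hAB : A j ∩ A k = ⋂ i : Fin n, X n i ⁻¹' (I j ∪ I k)ᶜ := by
        rw [hAdef]
        ext ω
        simp only [Set.mem_inter_iff, Set.mem_iInter, Set.mem_preimage,
          Set.mem_compl_iff, Set.mem_union, not_or]
        constructor
        · intro ⟨ha, hb⟩ i; exact ⟨ha i, hb i⟩
        · intro h; exact ⟨fun i => (h i).1, fun i => (h i).2⟩
      rw [hAB, avoid_measure P (X n) (hmeas n) (hunif n) (hindep n) _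
        ((hImeas j).union (hImeas k))
        (Set.union_subset (hIsub j) (hIsub k))]
      rw [measure_union (hdisj j k hjk) (hImeas k), hIvol j, hIvol k,
        ← ENNReal.ofReal_add (by positivity) (by positivity)]
      have h4 : 2*ρ + 2*ρ = 4*ρ := by ring
      rw [h4, ← ENNReal.ofReal_one, ← ENNReal.ofReal_sub _ (by positivity),
        ← ENNReal.ofReal_pow (by linarith)]
    -- Bonferroni
    have hq : (1 - 4*ρ)^n ≤ (p*p : ℝ) := by
      have h1 : (0:ℝ) ≤ 1 - 4*ρ := by linarith
      have h2 : (1 - 4*ρ) ≤ (1 - 2*ρ)^2 := by nlinarith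
      have h3 : (1-4*ρ)^n ≤ ((1-2*ρ)^2)^n := pow_le_pow_left₀ h1 h2 n
      have h4 : ((1-2*ρ)^2)^n = p*p := by
        rw [hpdef, ← pow_mul, mul_comm 2 n, pow_mul]; ring
      linarith
    have hbon := bonferroni_aux P A hAmeas
    have hsum : ∑ j : Fin m, P (A j) = ENNReal.ofReal ((m:ℝ) * p) := by
      simp only [hPA, Finset.sum_const, Finset.card_univ, Fintype.card_fin,
        nsmul_eq_mul]
      rw [← ENNReal.ofReal_natCast m, ← ENNReal.ofReal_mul (Nat.cast_nonneg m)]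
    have hpair : ∑ q ∈ Finset.univ.offDiag, P (A q.1 ∩ A q.2)
        ≤ ENNReal.ofReal (((m:ℝ)*p)*((m:ℝ)*p)) := by
      calc ∑ q ∈ Finset.univ.offDiag, P (A q.1 ∩ A q.2)
          ≤ (Finset.univ.offDiag (α := Fin m)).card • ENNReal.ofReal (p*p) := by
            apply Finset.sum_le_card_nsmul
            intro q hq'
            have hne := (Finset.mem_offDiag.mp hq').2.2
            rw [hPAA q.1 q.2 hne]
            exact ENNReal.ofReal_le_ofReal hq
        _ ≤ (m*m : ℕ) • ENNReal.ofReal (p*p) := by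
            have hcard : (Finset.univ.offDiag (α := Fin m)).card ≤ m*m := by
              rw [Finset.offDiag_card]
              simp only [Finset.card_univ, Fintype.card_fin]
              omega
            rw [nsmul_eq_mul, nsmul_eq_mul]
            exact mul_le_mul_left (Nat.cast_le.mpr hcard) _
        _ = ENNReal.ofReal (((m:ℝ)*p)*((m:ℝ)*p)) := by
            rw [nsmul_eq_mul, ← ENNReal.ofReal_natCast (m*m),
              ← ENNReal.ofReal_mul (Nat.cast_nonneg _)]
            congr 1
            push_cast
            ring
    -- lower bound on P(⋃ A)
    have hUnion : ENNReal.ofReal (3/16) ≤ P (⋃ j, A j) := by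
      by_cases hpc : 1/4 ≤ p
      · have hj0 : P (A ⟨0, hm1⟩) ≤ P (⋃ j, A j) :=
          measure_mono (Set.subset_iUnion A _)
        rw [hPA] at hj0
        exact le_trans (ENNReal.ofReal_le_ofReal (by linarith)) hj0
      · push_neg at hpc
        have hmp_up : (m:ℝ) * p ≤ 1/2 := by
          have := mul_le_mul_of_nonneg_right hm_up (le_of_lt hppos)
          have he : (1/(4*p) + 1) * p = 1/4 + p := by field_simp
          nlinarith
        have hreal : 3/16 ≤ (m:ℝ)*p - ((m:ℝ)*p)*((m:ℝ)*p) := by nlinarith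
        have hle : ENNReal.ofReal ((m:ℝ)*p) ≤ P (⋃ j, A j)
            + ENNReal.ofReal (((m:ℝ)*p)*((m:ℝ)*p)) := by
          calc ENNReal.ofReal ((m:ℝ)*p) = ∑ j : Fin m, P (A j) := hsum.symm
            _ ≤ _ := le_trans hbon (add_le_add le_rfl hpair)
        have hsub' : ENNReal.ofReal ((m:ℝ)*p) - ENNReal.ofReal (((m:ℝ)*p)*((m:ℝ)*p))
            ≤ P (⋃ j, A j) := tsub_le_iff_right.mpr hle
        rw [← ENNReal.ofReal_sub _ (by positivity)] at hsub'
        exact le_trans (ENNReal.ofReal_le_ofReal hreal) hsub'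
    -- coverage is contained in the complement of the union
    have hcov : {ω | ∀ x ∈ Set.Icc (0:ℝ) 1, ∃ i : Fin n,
        X n i ω ∈ Set.Icc (x - ρ) (x + ρ)} ⊆ (⋃ j, A j)ᶜ := by
      intro ω hω
      simp only [Set.mem_compl_iff, Set.mem_iUnion, not_exists]
      intro j hj
      have hj' := hjm j
      have hx : (3*ρ*(j:ℕ) + ρ) ∈ Set.Icc (0:ℝ) 1 := by
        constructor
        · positivity
        · nlinarith
      obtain ⟨i, hi⟩ := hω _ hx
      obtain ⟨hi1, hi2⟩ := hi
      have hiI : X n i ω ∈ I j := by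
        rw [hIdef]
        exact ⟨by linarith, by linarith⟩
      rw [hAdef] at hj
      exact (Set.mem_iInter.mp hj i) hiI
    have hUmeas : MeasurableSet (⋃ j, A j) := MeasurableSet.iUnion hAmeas
    refine le_trans (measure_mono hcov) ?_
    rw [prob_compl_eq_one_sub hUmeas]
    refine le_trans (tsub_le_tsub_left hUnion 1) ?_
    rw [← ENNReal.ofReal_one, ← ENNReal.ofReal_sub _ (by norm_num)]
    norm_num
  exact Filter.limsup_le_of_le (by isBoundedDefault) hev
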